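/- Let X be a nonempty connected topological space equipped with its Borel σ-algebra and a σ-finite Borel measure μ, let k : X → ℝ be continuous, let m < M be real numbers with m ≤ k(x) ≤ M for every x ∈ X, and let g : X → ℝ be μ-integrable. Assume that for every y with m < y < M one has ∫_{{x : k(x) > y}} g dμ > 0 and ∫_{{x : k(x) ≤ y}} g dμ > 0. Then there exists a point x₀ ∈ X such that ∫_X k(x) g(x) dμ(x) = k(x₀) ∫_X g(x) dμ(x). -/

import Mathlib

open MeasureTheory

/-- Attained form of the Mean Value Theorem (underlying Corollary 6 of the
paper): for a continuous weight `k` on a nonempty connected space, the mean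
value `k̂` is realized as `k x₀` for some point `x₀`. -/
theorem mean_value_weight_attained
    {X : Type*} [TopologicalSpace X] [ConnectedSpace X] [Nonempty X]
    [MeasurableSpace X] [BorelSpace X]
    (μ : Measure X) [SigmaFinite μ]
    (k : X → ℝ) (hk : Continuous k)
    (m M : ℝ) (hmM : m < M)
    (hbd : ∀ x, m ≤ k x ∧ k x ≤ M)
    (g : X → ℝ) (hg : Integrable g μ)
    (hsuper : ∀ y, m < y → y < M → 0 < ∫ x in {x | k x > y}, g x ∂μ)
    (hsub : ∀ y, m < y → y < M → 0 < ∫ x in {x | k x ≤ y}, g x ∂μ) :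
    ∃ x₀ : X, ∫ x, k x * g x ∂μ = k x₀ * ∫ x, g x ∂μ := by
  have hkb : ∀ x, m ≤ k x := fun x => (hbd x).1
  have hkt : ∀ x, k x ≤ M := fun x => (hbd x).2
  set I := ∫ x, g x ∂μ with hIdef
  set J := ∫ x, k x * g x ∂μ with hJdef
  have hSy : ∀ y : ℝ, MeasurableSet {x : X | y < k x} := fun y =>
    (isOpen_lt continuous_const hk).measurableSet
  have hcompl : ∀ y : ℝ, {x : X | y < k x}ᶜ = {x : X | k x ≤ y} := by
    intro y; ext x; simp [not_lt]
  have hsplit : ∀ y : ℝ,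
      (∫ x in {x : X | y < k x}, g x ∂μ) + (∫ x in {x : X | k x ≤ y}, g x ∂μ) = I := by
    intro y
    rw [← hcompl y]
    exact integral_add_compl (hSy y) hg
  -- `I > 0`
  have hIpos : 0 < I := by
    have h1 := hsuper ((m + M) / 2) (by linarith) (by linarith)
    have h2 := hsub ((m + M) / 2) (by linarith) (by linarith)
    have h3 := hsplit ((m + M) / 2)
    have h1' : 0 < ∫ x in {x : X | (m + M) / 2 < k x}, g x ∂μ := h1
    linarith
  -- integrability of `k * g`
  have hkg : Integrable (fun x => k x * g x) μ := by
    refine hg.bdd_mul (c := max |m| |M|) hk.aestronglyMeasurable (Filter.Eventually.of_forall fun x => ?_)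
    rw [Real.norm_eq_abs, abs_le]
    constructor
    · have : -(max |m| |M|) ≤ -|m| := by simp
      have := neg_abs_le m
      linarith [hkb x]
    · have : |M| ≤ max |m| |M| := le_max_right _ _
      linarith [le_abs_self M, hkt x]
  -- Fubini setup
  set ν : Measure ℝ := (volume : Measure ℝ).restrict (Set.Ioc m M) with hν
  haveI : IsFiniteMeasure ν := by
    constructor
    rw [hν, Measure.restrict_apply_univ, Real.volume_Ioc]
    exact ENNReal.ofReal_lt_top
  set S : Set (X × ℝ) := {p | p.2 < k p.1} with hSdef
  have hS : MeasurableSet S :=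
    (isOpen_lt continuous_snd (hk.comp continuous_fst)).measurableSet
  set h : X × ℝ → ℝ := S.indicator (fun p => g p.1) with hhdef
  have hg1 : Integrable (fun p : X × ℝ => g p.1) (μ.prod ν) := by
    simpa using hg.mul_prod (integrable_const (1 : ℝ))
  have hint : Integrable h (μ.prod ν) := hg1.indicator hS
  set F : ℝ → ℝ := fun y => ∫ x in {x : X | y < k x}, g x ∂μ with hFdef
  -- inner integral in `y`
  have hL : ∀ x, (∫ y, h (x, y) ∂ν) = (k x - m) * g x := by
    intro x
    have hfun : (fun y => h (x, y)) = (Set.Iio (k x)).indicator (fun _ => g x) := by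
      ext y
      by_cases hy : y < k x <;> simp [hhdef, hSdef, Set.indicator, hy]
    rw [hfun, integral_indicator measurableSet_Iio, setIntegral_const]
    have hmeas : ν (Set.Iio (k x)) = ENNReal.ofReal (k x - m) := by
      rw [hν, Measure.restrict_apply measurableSet_Iio]
      have : Set.Iio (k x) ∩ Set.Ioc m M = Set.Ioo m (k x) := by
        ext y
        simp only [Set.mem_inter_iff, Set.mem_Iio, Set.mem_Ioc, Set.mem_Ioo]
        constructor
        · rintro ⟨h1, h2, _⟩; exact ⟨h2, h1⟩
        · rintro ⟨h1, h2⟩; exact ⟨h2, h1, le_trans (le_of_lt h2) (hkt x)⟩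
      rw [this, Real.volume_Ioo]
    rw [measureReal_def, hmeas, ENNReal.toReal_ofReal (by linarith [hkb x])]
    simp [smul_eq_mul]
  -- inner integral in `x`
  have hR : ∀ y, (∫ x, h (x, y) ∂μ) = F y := by
    intro y
    have hfun : (fun x => h (x, y)) = {x : X | y < k x}.indicator g := by
      ext x
      by_cases hx : y < k x <;> simp [hhdef, hSdef, Set.indicator, hx]
    rw [hfun, integral_indicator (hSy y)]
  -- Fubini
  have hswap : ∫ x, ∫ y, h (x, y) ∂ν ∂μ = ∫ y, ∫ x, h (x, y) ∂μ ∂ν :=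
    integral_integral_swap hint
  have hLHS : ∫ x, ∫ y, h (x, y) ∂ν ∂μ = J - m * I := by
    rw [integral_congr_ae (Filter.Eventually.of_forall hL)]
    have : ∀ x, (k x - m) * g x = k x * g x - m * g x := by intro x; ring
    rw [integral_congr_ae (Filter.Eventually.of_forall fun x => this x),
      integral_sub hkg (hg.const_mul m), integral_const_mul]
  have hRHS : ∫ y, ∫ x, h (x, y) ∂μ ∂ν = ∫ y, F y ∂ν :=
    integral_congr_ae (Filter.Eventually.of_forall hR)
  have hkey : J - m * I = ∫ y, F y ∂ν := by rw [← hLHS, hswap, hRHS]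
  have hFint : Integrable F ν := by
    have := hint.integral_prod_right
    exact this.congr (Filter.Eventually.of_forall hR)
  -- positivity facts about F on Ioc m M
  have hFM : F M = 0 := by
    have : {x : X | M < k x} = ∅ := by
      ext x; simp only [Set.mem_setOf_eq, Set.mem_empty_iff_false, iff_false, not_lt]
      exact hkt x
    rw [hFdef]
    simp only [this, Measure.restrict_empty, integral_zero_measure]
  have hFpos : ∀ y ∈ Set.Ioo m M, 0 < F y := fun y hy => hsuper y hy.1 hy.2
  have hFnonneg : ∀ y ∈ Set.Ioc m M, 0 ≤ F y := by
    intro y hy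
    rcases lt_or_eq_of_le hy.2 with h' | h'
    · exact le_of_lt (hFpos y ⟨hy.1, h'⟩)
    · rw [h', hFM]
  have hIoo : ν (Set.Ioo m M) = ENNReal.ofReal (M - m) := by
    rw [hν, Measure.restrict_apply measurableSet_Ioo,
      Set.inter_eq_left.mpr Set.Ioo_subset_Ioc_self, Real.volume_Ioo]
  -- ∫ F ∂ν > 0
  have hpos_int : ∀ (φ : ℝ → ℝ), Integrable φ ν → (∀ y ∈ Set.Ioc m M, 0 ≤ φ y) →
      (∀ y ∈ Set.Ioo m M, 0 < φ y) → 0 < ∫ y, φ y ∂ν := by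
    intro φ hφint hφ0 hφpos
    have hae : 0 ≤ᵐ[ν] φ := by
      rw [hν, Filter.EventuallyLE, ae_restrict_iff' measurableSet_Ioc]
      exact Filter.Eventually.of_forall fun y hy => hφ0 y hy
    rw [integral_pos_iff_support_of_nonneg_ae hae hφint]
    have hsub' : Set.Ioo m M ⊆ Function.support φ := fun y hy =>
      ne_of_gt (hφpos y hy)
    calc (0 : ENNReal) < ENNReal.ofReal (M - m) := by
          simp [sub_pos.mpr hmM]
      _ = ν (Set.Ioo m M) := hIoo.symm
      _ ≤ ν (Function.support φ) := measure_mono hsub'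
  have hA : m * I < J := by
    have := hpos_int F hFint hFnonneg hFpos
    rw [← hkey] at this
    linarith
  -- now the other side: G y = I - F y
  have hGsub : ∀ y, I - F y = ∫ x in {x : X | k x ≤ y}, g x ∂μ := by
    intro y
    have := hsplit y
    rw [hFdef]
    linarith [hsplit y]
  have hGint : Integrable (fun y => I - F y) ν := (integrable_const I).sub hFint
  have hGpos : ∀ y ∈ Set.Ioc m M, 0 < I - F y := by
    intro y hy
    rcases lt_or_eq_of_le hy.2 with h' | h'
    · rw [hGsub y]; exact hsub y hy.1 h'
    · rw [h', hFM]; simpa using hIpos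
  have hGintpos : 0 < ∫ y, I - F y ∂ν :=
    hpos_int _ hGint (fun y hy => le_of_lt (hGpos y hy)) (fun y hy =>
      hGpos y (Set.Ioo_subset_Ioc_self hy))
  have hGval : ∫ y, I - F y ∂ν = (M - m) * I - (J - m * I) := by
    rw [integral_sub (integrable_const I) hFint, ← hkey, integral_const]
    have : (ν Set.univ).toReal = M - m := by
      rw [hν, Measure.restrict_apply_univ, Real.volume_Ioc,
        ENNReal.toReal_ofReal (by linarith)]
    rw [measureReal_def, this, smul_eq_mul]
  have hB : J < M * I := by
    rw [hGval] at hGintpos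
    nlinarith
  -- the mean value
  set c : ℝ := J / I with hcdef
  have hc1 : m < c := (lt_div_iff₀ hIpos).2 hA
  have hc2 : c < M := by
    rw [hcdef, div_lt_iff₀ hIpos]
    linarith
  have ha : ∃ a, k a ≤ c := by
    by_contra hcon
    push_neg at hcon
    have hempty : {x : X | k x ≤ c} = ∅ := by
      ext x
      simp only [Set.mem_setOf_eq, Set.mem_empty_iff_false, iff_false, not_le]
      exact hcon x
    have := hsub c hc1 hc2
    rw [hempty] at this
    simp at this
  have hb : ∃ b, c ≤ k b := by
    by_contra hcon
    push_neg at hcon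
    have hempty : {x : X | k x > c} = ∅ := by
      ext x
      simp only [Set.mem_setOf_eq, Set.mem_empty_iff_false, iff_false, not_lt]
      exact le_of_lt (hcon x)
    have := hsuper c hc1 hc2
    rw [hempty] at this
    simp at this
  obtain ⟨a, ha⟩ := ha
  obtain ⟨b, hb⟩ := hb
  have hc_mem : c ∈ Set.Icc (k a) (k b) := ⟨ha, hb⟩
  obtain ⟨x₀, hx₀⟩ := intermediate_value_univ a b hk hc_mem
  refine ⟨x₀, ?_⟩
  rw [hx₀, hcdef]
  field_simp
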